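/- Let Ω_{i-1} be symmetric positive definite, h ∈ ℝ^{2M}, α > 0, Ω_i = (Ω_{i-1}^{-1} + α h hᵀ)^{-1}, and let y be a random vector with E[y yᵀ] = Ω_i^{-1} - α h hᵀ. Then the residual r = σ² Ω_i y satisfies E[‖r‖²] = σ⁴ [Tr(Ω_i) - (Tr(Ω_{i-1}) - Tr(Ω_i)) / (1 + α hᵀ Ω_{i-1} h)]. -/

import Mathlib

open Matrix

open MeasureTheory

section aux
variable {n : Type*} [Fintype n]

lemma myMul_vecMulVec (Mt : Matrix n n ℝ) (u v : n → ℝ) :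
    Mt * Matrix.vecMulVec u v = Matrix.vecMulVec (Mt *ᵥ u) v := by
  ext i j
  simp only [Matrix.mul_apply, Matrix.vecMulVec_apply, Matrix.mulVec, dotProduct,
    Finset.sum_mul]
  exact Finset.sum_congr rfl fun k _ => by ring

lemma myTrace_vecMulVec (u v : n → ℝ) : (Matrix.vecMulVec u v).trace = u ⬝ᵥ v := by
  simp [Matrix.trace, Matrix.diag, Matrix.vecMulVec_apply, dotProduct]

lemma myVecMulVec_mulVec (u v x : n → ℝ) :
    (Matrix.vecMulVec u v) *ᵥ x = (v ⬝ᵥ x) • u := by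
  funext i
  simp only [Matrix.mulVec, dotProduct, Matrix.vecMulVec_apply, Pi.smul_apply, smul_eq_mul]
  rw [Finset.sum_mul]
  exact Finset.sum_congr rfl fun k _ => by ring

lemma mySum3 (Om E : Matrix n n ℝ) (hsym : ∀ a b, Om a b = Om b a) :
    ∑ i, ∑ j, ∑ k, Om i j * Om i k * E j k = (Om * E * Om).trace := by
  simp only [Matrix.trace, Matrix.diag, Matrix.mul_apply, Finset.sum_mul, Finset.mul_sum]
  refine Finset.sum_congr rfl fun i _ => ?_
  rw [Finset.sum_comm]
  refine Finset.sum_congr rfl fun j _ => Finset.sum_congr rfl fun k _ => ?_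
  rw [hsym j i]
  ring
end aux

/-- Case 3 of Proposition 1: with `Ωᵢ = (Ω_{i-1}⁻¹ + α h hᵀ)⁻¹` and
`E[y yᵀ] = Ωᵢ⁻¹ - α h hᵀ`, the residual `r = σ² Ωᵢ y` satisfies
`E[‖r‖²] = σ⁴ [Tr(Ωᵢ) - (Tr(Ω_{i-1}) - Tr(Ωᵢ)) / (1 + α hᵀ Ω_{i-1} h)]`. -/
theorem expected_residual_case3
    {M : ℕ} {W : Type*} [MeasurableSpace W] (μ : Measure W) [IsProbabilityMeasure μ]
    (y : W → Fin (2 * M) → ℝ) (Omp : Matrix (Fin (2 * M)) (Fin (2 * M)) ℝ)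
    (h : Fin (2 * M) → ℝ) (α σ : ℝ) (hα : 0 < α) (hσ : 0 < σ) (hpd : Omp.PosDef)
    (hint : ∀ i j, Integrable (fun w => y w i * y w j) μ)
    (hcov : ∀ i j, ∫ w, y w i * y w j ∂μ =
      (((Omp⁻¹ + α • Matrix.vecMulVec h h)⁻¹)⁻¹ - α • Matrix.vecMulVec h h) i j) :
    ∫ w, ∑ i, ((σ ^ 2 • ((Omp⁻¹ + α • Matrix.vecMulVec h h)⁻¹).mulVec (y w)) i) ^ 2 ∂μ =
      σ ^ 4 * (((Omp⁻¹ + α • Matrix.vecMulVec h h)⁻¹).trace -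
        (Omp.trace - ((Omp⁻¹ + α • Matrix.vecMulVec h h)⁻¹).trace) /
          (1 + α * (h ⬝ᵥ Omp.mulVec h))) := by
  set V := Matrix.vecMulVec h h with hV
  set B := Omp⁻¹ + α • V with hB
  set Om := B⁻¹ with hOm
  -- positive definiteness of B
  have hVmv : ∀ x : Fin (2 * M) → ℝ, V *ᵥ x = (h ⬝ᵥ x) • h := fun x => by
    rw [hV]; exact myVecMulVec_mulVec h h x
  have hVpsd : (α • V).PosSemidef := by
    refine Matrix.PosSemidef.of_dotProduct_mulVec_nonneg ?_ ?_
    · ext i j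
      simp [hV, Matrix.conjTranspose_apply, Matrix.vecMulVec_apply, mul_comm]
    · intro x
      have hx : star x ⬝ᵥ ((α • V) *ᵥ x) = α * (h ⬝ᵥ x) ^ 2 := by
        rw [Matrix.smul_mulVec, hVmv, dotProduct_smul, dotProduct_smul]
        simp only [star_trivial, smul_eq_mul]
        rw [dotProduct_comm]
        ring
      rw [hx]
      positivity
  have hBpd : B.PosDef := hpd.inv.add_posSemidef hVpsd
  have hdA : IsUnit Omp.det := hpd.det_pos.ne'.isUnit
  have hdB : IsUnit B.det := hBpd.det_pos.ne'.isUnit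
  have hA1 : Omp * Omp⁻¹ = 1 := Matrix.mul_nonsing_inv _ hdA
  have hB1 : B * Om = 1 := Matrix.mul_nonsing_inv _ hdB
  have hB2 : Om * B = 1 := Matrix.nonsing_inv_mul _ hdB
  have hBinvinv : Om⁻¹ = B := Matrix.nonsing_inv_nonsing_inv _ hdB
  have hE : Om⁻¹ - α • V = Omp⁻¹ := by
    rw [hBinvinv, hB]; exact add_sub_cancel_right _ _
  -- symmetry of Om
  have hOmSym : ∀ a b, Om a b = Om b a := by
    intro a b
    have h1 := hBpd.inv.isHermitian
    have h2 := congrFun (congrFun h1 a) b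
    simpa [Matrix.conjTranspose_apply] using h2.symm
  have hOmT : Omᵀ = Om := by
    ext a b; exact hOmSym b a
  -- scalar quantities
  set d := h ⬝ᵥ Omp *ᵥ h with hd
  set s := h ⬝ᵥ Om *ᵥ h with hs
  set w := Omp *ᵥ h with hw
  have hd0 : 0 ≤ d := by
    have := hpd.posSemidef.dotProduct_mulVec_nonneg h
    simpa [hd] using this
  have hden : (0:ℝ) < 1 + α * d := by nlinarith
  -- key vector identity
  have hkey : Om *ᵥ h = (1 - α * s) • w := by
    have h1 : B *ᵥ (Om *ᵥ h) = h := by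
      rw [Matrix.mulVec_mulVec, hB1, Matrix.one_mulVec]
    have h2 : Omp⁻¹ *ᵥ (Om *ᵥ h) = h - (α * s) • h := by
      have expand : B *ᵥ (Om *ᵥ h) = Omp⁻¹ *ᵥ (Om *ᵥ h) + (α * s) • h := by
        rw [hB, Matrix.add_mulVec, Matrix.smul_mulVec, hVmv, ← hs, smul_smul]
      rw [h1] at expand
      rw [eq_sub_iff_add_eq]
      exact expand.symm
    have h3 : Omp *ᵥ (Omp⁻¹ *ᵥ (Om *ᵥ h)) = Om *ᵥ h := by
      rw [Matrix.mulVec_mulVec, hA1, Matrix.one_mulVec]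
    calc Om *ᵥ h = Omp *ᵥ (h - (α * s) • h) := by rw [← h3, h2]
      _ = Omp *ᵥ ((1 - α * s) • h) := by
          congr 1
          rw [sub_smul, one_smul]
      _ = (1 - α * s) • w := by rw [Matrix.mulVec_smul, hw]
  have hsd : s = (1 - α * s) * d := by
    have hx : h ⬝ᵥ (Om *ᵥ h) = (1 - α * s) * d := by
      rw [hkey, dotProduct_smul, smul_eq_mul, hd]
    rw [← hx]
  have htmul : (1 - α * s) * (1 + α * d) = 1 := by linear_combination (-α) * hsd
  -- dot product identity
  have hOmw : (Om *ᵥ w) ⬝ᵥ h = (1 - α * s) * (w ⬝ᵥ w) := by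
    rw [dotProduct_comm, Matrix.dotProduct_mulVec]
    have hvm : h ᵥ* Om = Om *ᵥ h := by
      conv_lhs => rw [← hOmT]
      exact Matrix.vecMul_transpose _ _
    rw [hvm, hkey, smul_dotProduct, smul_eq_mul]
  -- trace identities
  have htrVcore : ∀ P : Matrix (Fin (2 * M)) (Fin (2 * M)) ℝ,
      (P * V * Om).trace = (Om *ᵥ (P *ᵥ h)) ⬝ᵥ h := by
    intro P
    rw [Matrix.trace_mul_comm, ← Matrix.mul_assoc, hV, myMul_vecMulVec,
      myTrace_vecMulVec, ← Matrix.mulVec_mulVec]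
  have htrA : (Om * Omp⁻¹ * Om).trace
      = Om.trace - α * ((1 - α * s) ^ 2 * (w ⬝ᵥ w)) := by
    have hOA : Omp⁻¹ = B - α • V := by rw [hB]; exact (add_sub_cancel_right _ _).symm
    rw [hOA, mul_sub, sub_mul, hB2, one_mul, Matrix.trace_sub]
    congr 1
    rw [Matrix.mul_smul, Matrix.smul_mul, Matrix.trace_smul, smul_eq_mul]
    congr 1
    rw [htrVcore Om, hkey, Matrix.mulVec_smul, smul_dotProduct, smul_eq_mul, hOmw]
    ring
  have htrB : Omp.trace - Om.trace = α * ((1 - α * s) * (w ⬝ᵥ w)) := by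
    have hsub : Omp - Om = Omp * (α • V) * Om := by
      have e1 : Omp * B * Om = Omp := by rw [Matrix.mul_assoc, hB1, mul_one]
      have e2 : Omp * Omp⁻¹ * Om = Om := by rw [hA1, one_mul]
      calc Omp - Om = Omp * B * Om - Omp * Omp⁻¹ * Om := by rw [e1, e2]
        _ = Omp * (B - Omp⁻¹) * Om := by rw [mul_sub, sub_mul]
        _ = Omp * (α • V) * Om := by rw [hB, add_sub_cancel_left]
    rw [← Matrix.trace_sub, hsub, Matrix.mul_smul, Matrix.smul_mul, Matrix.trace_smul,
      smul_eq_mul]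
    congr 1
    rw [htrVcore Omp, ← hw, hOmw]
  -- the integral computation
  have hintegrand : ∀ wv, (∑ i, ((σ ^ 2 • (Om *ᵥ (y wv))) i) ^ 2)
      = ∑ i, ∑ j, ∑ k, (σ ^ 4 * (Om i j * Om i k)) * (y wv j * y wv k) := by
    intro wv
    refine Finset.sum_congr rfl fun i _ => ?_
    have happ : (σ ^ 2 • (Om *ᵥ y wv)) i = σ ^ 2 * (∑ j, Om i j * y wv j) := by
      simp [Matrix.mulVec, dotProduct]
    rw [happ]
    calc (σ ^ 2 * (∑ j, Om i j * y wv j)) ^ 2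
        = σ ^ 4 * ((∑ j, Om i j * y wv j) * (∑ k, Om i k * y wv k)) := by ring
      _ = ∑ j, ∑ k, (σ ^ 4 * (Om i j * Om i k)) * (y wv j * y wv k) := by
          rw [Finset.sum_mul_sum, Finset.mul_sum]
          refine Finset.sum_congr rfl fun j _ => ?_
          rw [Finset.mul_sum]
          exact Finset.sum_congr rfl fun k _ => by ring
  calc ∫ wv, ∑ i, ((σ ^ 2 • (Om *ᵥ (y wv))) i) ^ 2 ∂μ
      = ∫ wv, ∑ i, ∑ j, ∑ k, (σ ^ 4 * (Om i j * Om i k)) * (y wv j * y wv k) ∂μ :=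
        integral_congr_ae (Filter.Eventually.of_forall fun wv => hintegrand wv)
    _ = ∑ i, ∑ j, ∑ k, (σ ^ 4 * (Om i j * Om i k)) * ∫ wv, y wv j * y wv k ∂μ := by
        rw [integral_finset_sum _ (fun i _ => integrable_finset_sum _ (fun j _ =>
          integrable_finset_sum _ (fun k _ => (hint j k).const_mul _)))]
        refine Finset.sum_congr rfl fun i _ => ?_
        rw [integral_finset_sum _ (fun j _ =>
          integrable_finset_sum _ (fun k _ => (hint j k).const_mul _))]
        refine Finset.sum_congr rfl fun j _ => ?_
        rw [integral_finset_sum _ (fun k _ => (hint j k).const_mul _)]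
        exact Finset.sum_congr rfl fun k _ => integral_const_mul _ _
    _ = ∑ i, ∑ j, ∑ k, (σ ^ 4 * (Om i j * Om i k)) * (Omp⁻¹ j k) := by
        refine Finset.sum_congr rfl fun i _ => Finset.sum_congr rfl fun j _ =>
          Finset.sum_congr rfl fun k _ => ?_
        rw [hcov j k, ← hE]
    _ = σ ^ 4 * (Om * Omp⁻¹ * Om).trace := by
        rw [← mySum3 Om Omp⁻¹ hOmSym]
        simp only [Finset.mul_sum]
        exact Finset.sum_congr rfl fun i _ => Finset.sum_congr rfl fun j _ =>
          Finset.sum_congr rfl fun k _ => by ring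
    _ = σ ^ 4 * (Om.trace - (Omp.trace - Om.trace) / (1 + α * d)) := by
        rw [htrA, htrB]
        congr 1
        have : α * ((1 - α * s) * (w ⬝ᵥ w)) / (1 + α * d)
            = α * ((1 - α * s) ^ 2 * (w ⬝ᵥ w)) := by
          rw [div_eq_iff hden.ne']
          linear_combination (-(α * (1 - α * s) * (w ⬝ᵥ w))) * htmul
        rw [this]
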